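/- The domain D_{4,2} is a Condorcet domain: for every profile consisting of an odd number of orders from D_{4,2}, the strict pairwise majority relation is transitive. -/

import Mathlib

open Set

/-- `r` is a (strict) linear order: irreflexive, transitive and total. -/
def IsLinOrder {A : Type*} (r : A → A → Prop) : Prop :=
  IsStrictTotalOrder A r

/-- Strict pairwise majority relation of a profile `P` of `m` orders:
`a` is majority-preferred to `b` if more orders in the profile rank `a` above `b`
than rank `b` above `a`. -/
def MajPrefers {A : Type*} {m : ℕ} (P : Fin m → (A → A → Prop)) (a b : A) : Prop :=
  Nat.card {i : Fin m // P i a b} > Nat.card {i : Fin m // P i b a}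

/-- `D` is a Condorcet domain: every profile of an odd number of (not necessarily
distinct) orders from `D` has a transitive strict pairwise majority relation. -/
def IsCondorcet {A : Type*} (D : Set (A → A → Prop)) : Prop :=
  ∀ (m : ℕ) (P : Fin m → (A → A → Prop)), Odd m → (∀ i, P i ∈ D) →
    Transitive (MajPrefers P)

/-- `D` is a maximal Condorcet domain: it is Condorcet, and no set of linear
orders strictly containing it is Condorcet. -/
def IsMaximalCondorcet {A : Type*} (D : Set (A → A → Prop)) : Prop :=
  IsCondorcet D ∧
    ∀ D' : Set (A → A → Prop), (∀ r ∈ D', IsLinOrder r) → D ⊂ D' → ¬ IsCondorcet D'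

/-- Never-top condition for `x` on the triple `T`: no order in `D` ranks `x`
above both other elements of `T`. -/
def NeverTop {A : Type*} (D : Set (A → A → Prop)) (T : Finset A) (x : A) : Prop :=
  ∀ p ∈ D, ¬ (∀ y ∈ T, y ≠ x → p x y)

/-- Never-bottom condition for `x` on the triple `T`: no order in `D` ranks `x`
below both other elements of `T`. -/
def NeverBottom {A : Type*} (D : Set (A → A → Prop)) (T : Finset A) (x : A) : Prop :=
  ∀ p ∈ D, ¬ (∀ y ∈ T, y ≠ x → p y x)

/-- Never-middle condition for `x` on the triple `T`: no order in `D` ranks `x`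
between the two other elements of `T`. -/
def NeverMiddle {A : Type*} (D : Set (A → A → Prop)) (T : Finset A) (x : A) : Prop :=
  ∀ p ∈ D, ¬ (∃ y ∈ T, ∃ z ∈ T, y ≠ x ∧ z ≠ x ∧ p y x ∧ p x z)

/-- `D` is peak-pit: every triple has an alternative that is never-top or never-bottom. -/
def IsPeakPit {A : Type*} (D : Set (A → A → Prop)) : Prop :=
  ∀ T : Finset A, T.card = 3 → ∃ x ∈ T, NeverTop D T x ∨ NeverBottom D T x

/-- `D` is Arrow's single-peaked: every triple has a never-bottom alternative. -/
def IsArrowSP {A : Type*} (D : Set (A → A → Prop)) : Prop :=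
  ∀ T : Finset A, T.card = 3 → ∃ x ∈ T, NeverBottom D T x

/-- `D` has maximal width: it contains two completely reversed linear orders. -/
def HasMaximalWidth {A : Type*} (D : Set (A → A → Prop)) : Prop :=
  ∃ p ∈ D, (fun a b => p b a) ∈ D

/-- A generalised arrangement of `n` pseudolines: continuous functions on `[0,1]`,
starting (at `0`) in strictly decreasing order of index, ending (at `1`) at pairwise
distinct values; every two of them intersect in a finite set of interior points, at
each of which their difference changes sign; and no three share a common point. -/
structure GenArrangement (n : ℕ) where
  line : Fin n → ℝ → ℝ
  continuous : ∀ i, ContinuousOn (line i) (Set.Icc (0:ℝ) 1)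
  start_anti : ∀ i j : Fin n, i < j → line j 0 < line i 0
  end_distinct : ∀ i j : Fin n, i ≠ j → line i 1 ≠ line j 1
  inter_finite : ∀ i j : Fin n, i ≠ j →
    {x : ℝ | x ∈ Set.Ioo (0:ℝ) 1 ∧ line i x = line j x}.Finite
  sign_change : ∀ i j : Fin n, i ≠ j → ∀ x ∈ Set.Ioo (0:ℝ) 1, line i x = line j x →
    ∃ ε > 0, Set.Ioo (x - ε) (x + ε) ⊆ Set.Ioo (0:ℝ) 1 ∧
      ∀ y ∈ Set.Ioo (x - ε) x, ∀ z ∈ Set.Ioo x (x + ε),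
        (line i y - line j y) * (line i z - line j z) < 0
  no_triple : ∀ i j k : Fin n, i ≠ j → j ≠ k → i ≠ k → ∀ x ∈ Set.Icc (0:ℝ) 1,
    ¬ (line i x = line j x ∧ line j x = line k x)

namespace GenArrangement

/-- The set `Z(i,j)` of interior intersection points of pseudolines `i` and `j`. -/
def Z {n : ℕ} (g : GenArrangement n) (i j : Fin n) : Set ℝ :=
  {x : ℝ | x ∈ Set.Ioo (0:ℝ) 1 ∧ g.line i x = g.line j x}

/-- The level of an intersection point `x ∈ Z(i,j)`: the number of indices
`k ∉ {i,j}` with `f k x > f i x`. -/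
noncomputable def level {n : ℕ} (g : GenArrangement n) (i j : Fin n) (x : ℝ) : ℕ :=
  Nat.card {k : Fin n // k ≠ i ∧ k ≠ j ∧ g.line i x < g.line k x}

/-- `g` is tame: for every pair of pseudolines, all their intersection points
are at the same level. -/
def Tame {n : ℕ} (g : GenArrangement n) : Prop :=
  ∀ i j : Fin n, i ≠ j → ∀ x₁ ∈ g.Z i j, ∀ x₂ ∈ g.Z i j,
    g.level i j x₁ = g.level i j x₂

/-- `g` is a classical (simple) arrangement: every two pseudolines cross exactly once. -/
def IsClassical {n : ℕ} (g : GenArrangement n) : Prop :=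
  ∀ i j : Fin n, i ≠ j → ∃ x : ℝ, g.Z i j = {x}

/-- `S` is a chamber set of `g`: for some `x ∈ [0,1]` and level `y` avoiding all
the lines, `S` is the set of lines passing above the point `(x, y)`. -/
def IsChamberSet {n : ℕ} (g : GenArrangement n) (S : Set (Fin n)) : Prop :=
  ∃ x ∈ Set.Icc (0:ℝ) 1, ∃ y : ℝ, (∀ i, g.line i x ≠ y) ∧ S = {i : Fin n | y < g.line i x}

/-- The domain `D(g)`: all linear orders on `Fin n` all of whose prefix sets
(equivalently, all of whose upward closed sets) are chamber sets of `g`. -/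
def domain {n : ℕ} (g : GenArrangement n) : Set (Fin n → Fin n → Prop) :=
  {r | IsLinOrder r ∧
    ∀ S : Set (Fin n), (∀ a ∈ S, ∀ b, r b a → b ∈ S) → g.IsChamberSet S}

end GenArrangement

/-- `t` is the top element of the order `p`. -/
def IsTopOf {A : Type*} (p : A → A → Prop) (t : A) : Prop :=
  ∀ y, y ≠ t → p t y

/-- `p` is single-peaked with respect to the axis `ax`: whenever `a` lies strictly
between `b` and the top of `p` on the axis, `p` ranks `a` above `b`. -/
def SinglePeakedWRT {A : Type*} (ax p : A → A → Prop) : Prop :=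
  ∀ t, IsTopOf p t → ∀ a b, ((ax b a ∧ ax a t) ∨ (ax t a ∧ ax a b)) → p a b

/-- The linear order determined by a list, ranking `a` above `b` iff `a` occurs
earlier in the list. -/
def ofList {A : Type*} [DecidableEq A] (l : List A) (a b : A) : Prop :=
  l.idxOf a < l.idxOf b

/-- The domain `D_{4,2}` of eight linear orders on `{1,2,3,4}` (represented as
`Fin 4`, with alternative `i+1` encoded as `i`): 1234, 2134, 2314, 3214, 2341,
3241, 2431, 4231. -/
def D42 : Set (Fin 4 → Fin 4 → Prop) :=
  {ofList [0,1,2,3], ofList [1,0,2,3], ofList [1,2,0,3], ofList [2,1,0,3],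
   ofList [1,2,3,0], ofList [2,1,3,0], ofList [1,3,2,0], ofList [3,1,2,0]}

/-- The domain `D_{3,1}` of four linear orders on `{1,2,3}` (represented as `Fin 3`,
with alternative `i+1` encoded as `i`): 123, 213, 231, 321. -/
def D31 : Set (Fin 3 → Fin 3 → Prop) :=
  {ofList [0,1,2], ofList [1,0,2], ofList [1,2,0], ofList [2,1,0]}


instance {A : Type*} [DecidableEq A] (l : List A) (a b : A) : Decidable (ofList l a b) :=
  inferInstanceAs (Decidable (_ < _))

/-- The eight lists defining `D42`. -/
def D42L : List (List (Fin 4)) :=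
  [[0,1,2,3],[1,0,2,3],[1,2,0,3],[2,1,0,3],[1,2,3,0],[2,1,3,0],[1,3,2,0],[3,1,2,0]]

lemma mem_D42 (r : Fin 4 → Fin 4 → Prop) (h : r ∈ D42) : ∃ l ∈ D42L, r = ofList l := by
  simp only [D42, Set.mem_insert_iff, Set.mem_singleton_iff] at h
  rcases h with h|h|h|h|h|h|h|h <;> subst h <;>
    exact ⟨_, by simp [D42L], rfl⟩

/-- Boolean test: in every order of the domain, `a` is preferred to `b` or to `c`. -/
def q1 (a b c : Fin 4) : Bool :=
  D42L.all fun l => decide (ofList l a b) || decide (ofList l a c)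

lemma q1_sound {a b c : Fin 4} (h : q1 a b c = true) :
    ∀ r ∈ D42, r a b ∨ r a c := by
  intro r hr
  obtain ⟨l, hl, rfl⟩ := mem_D42 r hr
  have := List.all_eq_true.mp h l hl
  simpa [Bool.or_eq_true, decide_eq_true_eq] using this

lemma q1_cover : ∀ a b c : Fin 4, a ≠ b → b ≠ c → a ≠ c →
    q1 a b c = true ∨ q1 b c a = true ∨ q1 c a b = true := by decide

lemma isLin_D42 : ∀ r ∈ D42, IsLinOrder r := by
  intro r hr
  obtain ⟨l, hl, rfl⟩ := mem_D42 r hr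
  fin_cases hl <;>
    exact { trichotomous := by decide, irrefl := by decide, trans := by decide }

lemma card_mono {m : ℕ} {Q R : Fin m → Prop} (h : ∀ i, Q i → R i) :
    Nat.card {i : Fin m // Q i} ≤ Nat.card {i : Fin m // R i} :=
  Nat.card_le_card_of_injective _ (Subtype.impEmbedding _ _ h).injective

lemma no_cycle {m : ℕ} {P : Fin m → Fin 4 → Fin 4 → Prop}
    (hlin : ∀ i, IsLinOrder (P i)) {a b c : Fin 4}
    (hNB : ∀ i, P i a b ∨ P i a c)
    (h1 : MajPrefers P b c) (h2 : MajPrefers P c a) : False := by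
  have hsub1 : ∀ i, P i b c → P i a c := fun i h =>
    (hNB i).elim (fun hab => (hlin i).trans _ _ _ hab h) id
  have hsub2 : ∀ i, P i c a → P i c b := fun i h =>
    (hNB i).elim (fun hab => (hlin i).trans _ _ _ h hab)
      (fun hac => absurd ((hlin i).trans _ _ _ h hac) ((hlin i).irrefl c))
  have k1 := card_mono hsub1
  have k2 := card_mono hsub2
  unfold MajPrefers at h1 h2
  omega

theorem D42_isCondorcet' : IsCondorcet D42 := by
  intro m P hm hP a b c hab hbc
  have hlin : ∀ i, IsLinOrder (P i) := fun i => isLin_D42 _ (hP i)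
  by_cases hab' : a = b
  · subst hab'; exact hbc
  by_cases hbc' : b = c
  · subst hbc'; exact hab
  by_cases hac' : a = c
  · subst hac'
    unfold MajPrefers at hab hbc ⊢
    omega
  -- no 3-cycle
  have hnot : ¬ MajPrefers P c a := by
    rcases q1_cover a b c hab' hbc' hac' with h|h|h
    · exact fun hca => no_cycle hlin (fun i => q1_sound h (P i) (hP i)) hbc hca
    · exact fun hca => no_cycle hlin (fun i => q1_sound h (P i) (hP i)) hca hab
    · exact fun _ => no_cycle hlin (fun i => q1_sound h (P i) (hP i)) hab hbc
  -- completeness of majority for odd m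
  have hasym : ∀ i, P i c a ↔ ¬ P i a c := by
    intro i
    constructor
    · exact fun h h' => absurd ((hlin i).trans _ _ _ h h') ((hlin i).irrefl c)
    · intro h
      by_contra h'
      exact hac' ((hlin i).trichotomous a c h h')
  have hsum : Nat.card {i : Fin m // P i a c} + Nat.card {i : Fin m // P i c a} = m := by
    classical
    have e : Nat.card {i : Fin m // P i c a} = Nat.card {i : Fin m // ¬ P i a c} :=
      Nat.card_congr (Equiv.subtypeEquivRight hasym)
    rw [e]
    have : Nat.card ({i : Fin m // P i a c} ⊕ {i : Fin m // ¬ P i a c}) = m := by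
      rw [Nat.card_congr (Equiv.sumCompl fun i => P i a c), Nat.card_eq_fintype_card,
        Fintype.card_fin]
    simpa [Nat.card_sum] using this
  unfold MajPrefers at hnot ⊢
  obtain ⟨k, hk⟩ := hm
  omega

/-- `D_{4,2}` is a Condorcet domain. -/
theorem D42_isCondorcet : IsCondorcet D42 := D42_isCondorcet'
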